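/- arXiv:1612.09260 — 2 statements merged into one kernel-verified Lean document; each statement's English description precedes it below -/
import Mathlib

section
/- In the partially reduced basis, for all α, β, γ ∈ μ: Σ_{a=1}^{n} Σ_{k=1}^{d_β} (φ^μ_R)^{αβ}_{i k}((a,n))·(φ^μ_R)^{βγ}_{k j}((a,n)) = n·(d_β/d_μ)·δ^{αγ}·δ_{ij}. -/
/-- Irreducibility of a matrix representation: the only invariant subspaces of `I → ℂ`
are `⊥` and `⊤`. -/
def MatRepIrreducible {G I : Type*} [Monoid G] [Fintype I] [DecidableEq I]
    (φ : G →* Matrix I I ℂ) : Prop :=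
  ∀ W : Submodule ℂ (I → ℂ), (∀ g : G, ∀ v ∈ W, (φ g).mulVec v ∈ W) → W = ⊥ ∨ W = ⊤

/-- The embedding of `S(m)` into `S(m+1)` as the permutations fixing the last element. -/
def embedLast {m : ℕ} (τ : Equiv.Perm (Fin m)) : Equiv.Perm (Fin (m + 1)) :=
  τ.viaFintypeEmbedding Fin.castSuccEmb

/-- The `(α,β)`-block of a matrix, for a block structure `blk : I → ι` on the index set. -/
def blkOf {I ι : Type*} (blk : I → ι) (A : Matrix I I ℂ) (α β : ι) :
    Matrix {p : I // blk p = α} {q : I // blk q = β} ℂ :=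
  Matrix.of fun p q => A p.val q.val

lemma embedLast_castSucc {m : ℕ} (τ : Equiv.Perm (Fin m)) (i : Fin m) :
    embedLast τ i.castSucc = (τ i).castSucc := by
  exact Equiv.Perm.viaFintypeEmbedding_apply_image τ Fin.castSuccEmb i

lemma embedLast_last {m : ℕ} (τ : Equiv.Perm (Fin m)) :
    embedLast τ (Fin.last m) = Fin.last m := by
  refine Equiv.Perm.viaFintypeEmbedding_apply_notMem_range τ Fin.castSuccEmb ?_
  rintro ⟨i, hi⟩
  simp only [Fin.castSuccEmb] at hi
  exact (Fin.castSucc_lt_last i).ne hi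

lemma embedLast_mul {m : ℕ} (σ τ : Equiv.Perm (Fin m)) :
    embedLast (σ * τ) = embedLast σ * embedLast τ := by
  ext x
  cases x using Fin.lastCases with
  | last => simp [Equiv.Perm.mul_apply, embedLast_last]
  | cast i => simp [Equiv.Perm.mul_apply, embedLast_castSucc]

lemma embedLast_one {m : ℕ} : embedLast (1 : Equiv.Perm (Fin m)) = 1 := by
  ext x
  cases x using Fin.lastCases with
  | last => simp [embedLast_last]
  | cast i => simp [embedLast_castSucc]

lemma embedLast_inv {m : ℕ} (τ : Equiv.Perm (Fin m)) :
    embedLast τ⁻¹ = (embedLast τ)⁻¹ := by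
  symm
  refine inv_eq_of_mul_eq_one_right ?_
  rw [← embedLast_mul, mul_inv_cancel, embedLast_one]

lemma embedLast_injective {m : ℕ} : Function.Injective (embedLast (m := m)) := by
  intro τ τ' h
  ext i
  have := congrArg (fun σ : Equiv.Perm (Fin (m+1)) => σ i.castSucc) h
  simp only [embedLast_castSucc] at this
  exact congrArg Fin.val (Fin.castSucc_injective m this)

lemma coset_bij (m : ℕ) :
    Function.Bijective (fun x : Fin (m + 1) × Equiv.Perm (Fin m) =>
      Equiv.swap x.1 (Fin.last m) * embedLast x.2) := by
  rw [Fintype.bijective_iff_injective_and_card]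
  constructor
  · rintro ⟨a, τ⟩ ⟨b, τ'⟩ h
    have hab : a = b := by
      have := congrArg (fun σ : Equiv.Perm (Fin (m+1)) => σ (Fin.last m)) h
      simpa [Equiv.Perm.mul_apply, embedLast_last] using this
    subst hab
    have := mul_left_cancel h
    exact Prod.ext rfl (embedLast_injective this)
  · simp [Fintype.card_perm, Nat.factorial_succ]

lemma schur_scalar {G I : Type*} [Monoid G] [Fintype I] [DecidableEq I] [Nonempty I]
    (φ : G →* Matrix I I ℂ) (hirr : MatRepIrreducible φ)
    (M : Matrix I I ℂ) (hM : ∀ g, φ g * M = M * φ g) :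
    ∃ c : ℂ, M = c • (1 : Matrix I I ℂ) := by
  obtain ⟨c, hc⟩ := Module.End.exists_eigenvalue (Matrix.mulVecLin M)
  refine ⟨c, ?_⟩
  set W := Module.End.eigenspace (Matrix.mulVecLin M) c with hW
  have hWinv : ∀ g : G, ∀ v ∈ W, (φ g).mulVec v ∈ W := by
    intro g v hv
    rw [hW, Module.End.mem_eigenspace_iff] at hv ⊢
    change M.mulVec v = c • v at hv
    change M.mulVec ((φ g).mulVec v) = c • (φ g).mulVec v
    rw [Matrix.mulVec_mulVec, ← hM g, ← Matrix.mulVec_mulVec, hv, Matrix.mulVec_smul]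
  rcases hirr W hWinv with h | h
  · exact absurd h hc
  · ext i j
    have hmem : (Pi.single j 1 : I → ℂ) ∈ W := h ▸ Submodule.mem_top
    rw [hW, Module.End.mem_eigenspace_iff] at hmem
    change M.mulVec (Pi.single j 1) = c • (Pi.single j 1 : I → ℂ) at hmem
    have := congrFun hmem i
    simpa [Matrix.mulVec, dotProduct, Pi.single_apply, mul_ite, Matrix.one_apply,
      eq_comm] using this

lemma mul_std_mul {I : Type*} [Fintype I] [DecidableEq I] (A B : Matrix I I ℂ) (k l p r : I) :
    (A * Matrix.single k l (1 : ℂ) * B) p r = A p k * B l r := by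
  rw [Matrix.mul_apply, Finset.sum_eq_single l]
  · rw [Matrix.mul_single_apply_same, mul_one]
  · intro b _ hb
    rw [Matrix.mul_single_apply_of_ne (hbj := hb), zero_mul]
  · intro h; exact absurd (Finset.mem_univ l) h

lemma great_orthog {G : Type*} [Group G] [Fintype G] {I : Type*} [Fintype I] [DecidableEq I]
    [Nonempty I]
    (φ : G →* Matrix I I ℂ) (hirr : MatRepIrreducible φ) (k l p r : I) :
    ∑ σ : G, φ σ p k * φ σ⁻¹ l r =
      ((Fintype.card G : ℂ) / (Fintype.card I : ℂ)) *
        ((if k = l then 1 else 0) * (if p = r then 1 else 0)) := by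
  have hIne : (Fintype.card I : ℂ) ≠ 0 := Nat.cast_ne_zero.mpr Fintype.card_ne_zero
  set M : Matrix I I ℂ := ∑ σ : G, φ σ * Matrix.single k l 1 * φ σ⁻¹ with hMdef
  have hcomm : ∀ g : G, φ g * M = M * φ g := by
    intro g
    rw [hMdef, Finset.mul_sum, Finset.sum_mul]
    refine Fintype.sum_bijective (fun σ => g * σ) (Group.mulLeft_bijective g) _ _ ?_
    intro σ
    have h1 : φ ((g * σ)⁻¹) * φ g = φ σ⁻¹ := by
      rw [← map_mul, mul_inv_rev, mul_assoc, inv_mul_cancel, mul_one]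
    calc φ g * (φ σ * Matrix.single k l 1 * φ σ⁻¹)
        = (φ g * φ σ) * Matrix.single k l 1 * φ σ⁻¹ := by
          simp only [mul_assoc]
      _ = φ (g * σ) * Matrix.single k l 1 * (φ ((g*σ)⁻¹) * φ g) := by
          rw [map_mul, h1]
      _ = φ (g * σ) * Matrix.single k l 1 * φ ((g*σ)⁻¹) * φ g := by
          simp only [mul_assoc]
  obtain ⟨c, hcM⟩ := schur_scalar φ hirr M hcomm
  have htrE : (Matrix.single k l (1:ℂ)).trace = (if k = l then 1 else 0) := by
    by_cases hkl : k = l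
    · subst hkl
      simp [Matrix.trace, Matrix.diag, Matrix.single, and_self]
    · rw [if_neg hkl, Matrix.trace]
      refine Finset.sum_eq_zero fun i _ => ?_
      simp only [Matrix.diag_apply, Matrix.single, Matrix.of_apply, ite_eq_right_iff,
        and_imp]
      rintro rfl rfl; exact absurd rfl hkl
  have htr : M.trace = (Fintype.card G : ℂ) * (if k = l then 1 else 0) := by
    have h : ∀ σ : G, (φ σ * Matrix.single k l (1:ℂ) * φ σ⁻¹).trace
        = (if k = l then 1 else 0) := by
      intro σ
      rw [Matrix.trace_mul_cycle, ← map_mul, inv_mul_cancel, map_one, one_mul, htrE]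
    rw [hMdef, Matrix.trace_sum, Finset.sum_congr rfl fun σ _ => h σ, Finset.sum_const,
      Finset.card_univ, nsmul_eq_mul]
  have htr2 : M.trace = c * (Fintype.card I : ℂ) := by
    rw [hcM, Matrix.trace_smul, Matrix.trace_one, smul_eq_mul]
  have hcval : c = (Fintype.card G : ℂ) * (if k = l then 1 else 0) / (Fintype.card I : ℂ) := by
    rw [eq_div_iff hIne, ← htr2, htr]
  have hentry : M p r = ∑ σ : G, φ σ p k * φ σ⁻¹ l r := by
    rw [hMdef, Matrix.sum_apply]
    exact Finset.sum_congr rfl fun σ _ => mul_std_mul _ _ k l p r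
  rw [← hentry, hcM]
  simp only [Matrix.smul_apply, Matrix.one_apply, smul_eq_mul, hcval]
  by_cases hpr : p = r <;> by_cases hkl : k = l <;> simp [hpr, hkl]

/-- PRIR bilinear sum rule: In the partially reduced basis (with `n = m+1`),
for all blocks `α, β, γ ∈ μ`, indices `i` in block `α` and `j` in block `γ` (stated below
entrywise, for all `p, r : I` with the inner index `k` running over block `β`):
`Σ_{a=1}^{n} Σ_k (φ^μ_R)^{αβ}_{ik}((a,n))·(φ^μ_R)^{βγ}_{kj}((a,n))
   = n·(d_β/d_μ)·δ^{αγ}·δ_{ij}`. -/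
theorem stmt16 (m : ℕ) {I ι : Type*} [Fintype I] [DecidableEq I] [DecidableEq ι]
    (φ : Equiv.Perm (Fin (m + 1)) →* Matrix I I ℂ)
    (hunit : ∀ g, φ g ∈ Matrix.unitaryGroup I ℂ)
    (hirr : MatRepIrreducible φ)
    (blk : I → ι)
    (ψ : ∀ α : ι, Equiv.Perm (Fin m) →*
        Matrix {p : I // blk p = α} {p : I // blk p = α} ℂ)
    (hirrψ : ∀ α : ι, MatRepIrreducible (ψ α))
    (hblock : ∀ (π : Equiv.Perm (Fin m)) (p q : I),
        blk p ≠ blk q → φ (embedLast π) p q = 0)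
    (hdiag : ∀ (π : Equiv.Perm (Fin m)) (α : ι) (p q : {x : I // blk x = α}),
        φ (embedLast π) p.val q.val = ψ α π p q)
    (β : ι) (p r : I) :
    ∑ a : Fin (m + 1),
        ∑ k ∈ Finset.univ.filter (fun k : I => blk k = β),
          φ (Equiv.swap a (Fin.last m)) p k * φ (Equiv.swap a (Fin.last m)) k r
      = ((m : ℂ) + 1) *
          ((Fintype.card {x : I // blk x = β} : ℂ) / (Fintype.card I : ℂ)) *
          (if p = r then 1 else 0) := by
  classical
  have hNe : Nonempty I := ⟨p⟩
  set F : Finset I := Finset.univ.filter (fun k : I => blk k = β) with hF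
  -- inner orthogonality over the block β
  have hker : ∀ (τ : Equiv.Perm (Fin m)) (l l' : I),
      (∑ k ∈ F, φ (embedLast τ) l k * φ (embedLast τ⁻¹) k l') =
        if blk l = β then (if l = l' then 1 else 0) else 0 := by
    intro τ l l'
    by_cases hl : blk l = β
    · rw [if_pos hl]
      have hfull : (∑ k ∈ F, φ (embedLast τ) l k * φ (embedLast τ⁻¹) k l')
          = ∑ k : I, φ (embedLast τ) l k * φ (embedLast τ⁻¹) k l' := by
        refine Finset.sum_subset (Finset.subset_univ F) fun x _ hx => ?_
        rw [hF, Finset.mem_filter] at hx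
        push_neg at hx
        have hxβ : blk x ≠ β := hx (Finset.mem_univ x)
        rw [hblock τ l x (by rw [hl]; exact fun h => hxβ h.symm), zero_mul]
      rw [hfull, ← Matrix.mul_apply, embedLast_inv, ← map_mul, mul_inv_cancel, map_one,
        Matrix.one_apply]
    · rw [if_neg hl]
      refine Finset.sum_eq_zero fun k hk => ?_
      rw [hF, Finset.mem_filter] at hk
      rw [hblock τ l k (by rw [hk.2]; exact hl), zero_mul]
  -- collapsing a coset term to the pure transposition term
  have key : ∀ (a : Fin (m + 1)) (τ : Equiv.Perm (Fin m)),
      (∑ k ∈ F, φ (Equiv.swap a (Fin.last m) * embedLast τ) p k *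
          φ ((Equiv.swap a (Fin.last m) * embedLast τ)⁻¹) k r)
        = ∑ k ∈ F, φ (Equiv.swap a (Fin.last m)) p k * φ (Equiv.swap a (Fin.last m)) k r := by
    intro a τ
    set s : Equiv.Perm (Fin (m + 1)) := Equiv.swap a (Fin.last m) with hs
    have hinv : (s * embedLast τ)⁻¹ = embedLast τ⁻¹ * s := by
      rw [mul_inv_rev, embedLast_inv, hs, Equiv.swap_inv]
    calc (∑ k ∈ F, φ (s * embedLast τ) p k * φ ((s * embedLast τ)⁻¹) k r)
        = ∑ k ∈ F, (∑ l : I, φ s p l * φ (embedLast τ) l k) *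
            (∑ l' : I, φ (embedLast τ⁻¹) k l' * φ s l' r) := by
          refine Finset.sum_congr rfl fun k _ => ?_
          rw [hinv, map_mul, map_mul, Matrix.mul_apply, Matrix.mul_apply]
      _ = ∑ k ∈ F, ∑ l : I, ∑ l' : I,
            (φ s p l * φ (embedLast τ) l k) * (φ (embedLast τ⁻¹) k l' * φ s l' r) := by
          refine Finset.sum_congr rfl fun k _ => ?_
          rw [Finset.sum_mul_sum]
      _ = ∑ l : I, ∑ l' : I, ∑ k ∈ F,
            (φ s p l * φ (embedLast τ) l k) * (φ (embedLast τ⁻¹) k l' * φ s l' r) := by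
          rw [Finset.sum_comm]
          exact Finset.sum_congr rfl fun l _ => Finset.sum_comm
      _ = ∑ l : I, ∑ l' : I, (φ s p l * φ s l' r) *
            ∑ k ∈ F, φ (embedLast τ) l k * φ (embedLast τ⁻¹) k l' := by
          refine Finset.sum_congr rfl fun l _ => Finset.sum_congr rfl fun l' _ => ?_
          rw [Finset.mul_sum]
          exact Finset.sum_congr rfl fun k _ => by ring
      _ = ∑ l : I, ∑ l' : I, (φ s p l * φ s l' r) *
            (if blk l = β then (if l = l' then 1 else 0) else 0) := by
          refine Finset.sum_congr rfl fun l _ => Finset.sum_congr rfl fun l' _ => ?_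
          rw [hker τ l l']
      _ = ∑ l : I, if blk l = β then φ s p l * φ s l r else 0 := by
          refine Finset.sum_congr rfl fun l _ => ?_
          by_cases hl : blk l = β
          · simp only [if_pos hl, mul_ite, mul_one, mul_zero]
            rw [Finset.sum_ite_eq Finset.univ l (fun l' => φ s p l * φ s l' r)]
            simp
          · simp [hl]
      _ = ∑ k ∈ F, φ s p k * φ s k r := by
          rw [hF, Finset.sum_filter]
  -- the grand sum over the whole group, computed two ways
  have hS2 : (∑ σ : Equiv.Perm (Fin (m + 1)), ∑ k ∈ F, φ σ p k * φ σ⁻¹ k r)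
      = (F.card : ℂ) * (((Fintype.card (Equiv.Perm (Fin (m + 1))) : ℂ) / (Fintype.card I : ℂ)) *
          (if p = r then 1 else 0)) := by
    rw [Finset.sum_comm]
    have : ∀ k ∈ F, (∑ σ : Equiv.Perm (Fin (m + 1)), φ σ p k * φ σ⁻¹ k r)
        = ((Fintype.card (Equiv.Perm (Fin (m + 1))) : ℂ) / (Fintype.card I : ℂ)) *
          (if p = r then 1 else 0) := by
      intro k _
      rw [great_orthog φ hirr k k p r]
      simp
    rw [Finset.sum_congr rfl this, Finset.sum_const, nsmul_eq_mul]
  have hS1 : (∑ σ : Equiv.Perm (Fin (m + 1)), ∑ k ∈ F, φ σ p k * φ σ⁻¹ k r)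
      = (Fintype.card (Equiv.Perm (Fin m)) : ℂ) *
          ∑ a : Fin (m + 1), ∑ k ∈ F,
            φ (Equiv.swap a (Fin.last m)) p k * φ (Equiv.swap a (Fin.last m)) k r := by
    rw [← Fintype.sum_bijective _ (coset_bij m)
        (fun x : Fin (m + 1) × Equiv.Perm (Fin m) =>
          ∑ k ∈ F, φ (Equiv.swap x.1 (Fin.last m) * embedLast x.2) p k *
            φ ((Equiv.swap x.1 (Fin.last m) * embedLast x.2)⁻¹) k r)
        (fun σ => ∑ k ∈ F, φ σ p k * φ σ⁻¹ k r) (fun x => rfl)]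
    rw [Fintype.sum_prod_type, Finset.mul_sum]
    refine Finset.sum_congr rfl fun a _ => ?_
    rw [Finset.sum_congr rfl fun τ _ => key a τ, Finset.sum_const, nsmul_eq_mul,
      Finset.card_univ]
  -- final bookkeeping
  have hmfac : ((Nat.factorial m : ℂ)) ≠ 0 := Nat.cast_ne_zero.mpr (Nat.factorial_ne_zero m)
  have hIne : (Fintype.card I : ℂ) ≠ 0 := Nat.cast_ne_zero.mpr Fintype.card_ne_zero
  have hcard1 : (Fintype.card (Equiv.Perm (Fin m)) : ℂ) = (Nat.factorial m : ℂ) := by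
    rw [Fintype.card_perm, Fintype.card_fin]
  have hcard2 : (Fintype.card (Equiv.Perm (Fin (m + 1))) : ℂ)
      = ((m : ℂ) + 1) * (Nat.factorial m : ℂ) := by
    rw [Fintype.card_perm, Fintype.card_fin, Nat.factorial_succ]
    push_cast
    ring
  have hcard3 : (F.card : ℂ) = (Fintype.card {x : I // blk x = β} : ℂ) := by
    rw [hF, Fintype.card_subtype]
  apply mul_left_cancel₀ hmfac
  rw [← hcard1, ← hS1, hS2, hcard1, hcard2, hcard3]
  field_simp
end

section
/- Consequently, for every α ∈ μ and every a ∈ {1,…,n-1}: Tr[(φ^μ_R)^{αα}((a,n))] = (n/2)·(d_α/d_μ)·χ^μ(12) − ((n-2)/2)·χ^α(12). -/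
/- ---------- auxiliary lemmas ---------- -/

lemma schur {G I : Type*} [Monoid G] [Fintype I] [DecidableEq I] [Nonempty I]
    (φ : G →* Matrix I I ℂ) (hirr : MatRepIrreducible φ) (M : Matrix I I ℂ)
    (hcomm : ∀ g, M * φ g = φ g * M) : ∃ c : ℂ, M = c • 1 := by
  obtain ⟨c, hc⟩ := Module.End.exists_eigenvalue (Matrix.mulVecLin M)
  obtain ⟨v, hv⟩ := hc.exists_hasEigenvector
  have hW : ∀ g : G, ∀ w ∈ Module.End.eigenspace (Matrix.mulVecLin M) c,
      (φ g).mulVec w ∈ Module.End.eigenspace (Matrix.mulVecLin M) c := by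
    intro g w hw
    rw [Module.End.mem_eigenspace_iff] at hw ⊢
    rw [Matrix.mulVecLin_apply] at hw ⊢
    rw [Matrix.mulVec_mulVec, hcomm, ← Matrix.mulVec_mulVec, hw, Matrix.mulVec_smul]
  rcases hirr _ hW with h | h
  · exact absurd (h ▸ hv.1 : v ∈ (⊥ : Submodule ℂ (I → ℂ))) (by simpa using hv.2)
  · refine ⟨c, ?_⟩
    ext i j
    have hj : (Pi.single j 1 : I → ℂ) ∈ Module.End.eigenspace (Matrix.mulVecLin M) c := by
      rw [h]; trivial
    rw [Module.End.mem_eigenspace_iff, Matrix.mulVecLin_apply] at hj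
    have := congrFun hj i
    simp only [Matrix.mulVec_single, mul_one, Pi.smul_apply, Pi.single_apply,
      smul_eq_mul, MulOpposite.op_one, one_smul, Matrix.col_apply] at this
    simp [this, Matrix.one_apply, Matrix.smul_apply, mul_ite]

lemma embedLast_swap {m : ℕ} (a b : Fin m) :
    embedLast (Equiv.swap a b) = Equiv.swap a.castSucc b.castSucc := by
  have hemb : ∀ y : Fin m, (Fin.castSuccEmb : Fin m ↪ Fin (m+1)) y = y.castSucc := fun _ => rfl
  unfold embedLast
  apply Equiv.ext
  intro x
  induction x using Fin.lastCases with
  | last =>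
    rw [Equiv.Perm.viaFintypeEmbedding_apply_notMem_range (Equiv.swap a b) Fin.castSuccEmb (by
        rintro ⟨y, hy⟩
        rw [hemb] at hy
        exact absurd hy (Fin.castSucc_lt_last y).ne)]
    rw [Equiv.swap_apply_of_ne_of_ne (Fin.castSucc_lt_last a).ne' (Fin.castSucc_lt_last b).ne']
  | cast y =>
    have h1 : (y.castSucc : Fin (m+1)) = Fin.castSuccEmb y := rfl
    rw [h1, Equiv.Perm.viaFintypeEmbedding_apply_image, hemb, hemb]
    rcases eq_or_ne y a with rfl | hya
    · simp
    rcases eq_or_ne y b with rfl | hyb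
    · simp
    · rw [Equiv.swap_apply_of_ne_of_ne hya hyb,
        Equiv.swap_apply_of_ne_of_ne (fun h => hya (Fin.castSucc_injective _ h))
          (fun h => hyb (Fin.castSucc_injective _ h))]

lemma trace_conj {G J : Type*} [Group G] [Fintype J] [DecidableEq J]
    (ρ : G →* Matrix J J ℂ) (c s : G) :
    Matrix.trace (ρ (c * s * c⁻¹)) = Matrix.trace (ρ s) := by
  rw [map_mul, map_mul, Matrix.trace_mul_comm, ← Matrix.mul_assoc, ← map_mul,
    inv_mul_cancel, map_one, Matrix.one_mul]

lemma trace_swap_eq {γ J : Type*} [DecidableEq γ] [Fintype γ] [Fintype J] [DecidableEq J]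
    (ρ : Equiv.Perm γ →* Matrix J J ℂ) {w x y z : γ} (hwx : w ≠ x) (hyz : y ≠ z) :
    Matrix.trace (ρ (Equiv.swap w x)) = Matrix.trace (ρ (Equiv.swap y z)) := by
  obtain ⟨c, hc⟩ := isConj_iff.mp (Equiv.Perm.isConj_swap hyz hwx)
  rw [← hc, trace_conj]

section Blocks

variable {I ι : Type*} [Fintype I] [DecidableEq I] [DecidableEq ι] (blk : I → ι)

lemma sum_fiber (α : ι) (f : I → ℂ)
    (hf : ∀ r : I, blk r ≠ α → f r = 0) :
    ∑ r : I, f r = ∑ r : {x : I // blk x = α}, f r.val := by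
  rw [← Finset.sum_subtype (Finset.filter (fun x => blk x = α) Finset.univ)
      (fun x => by simp) f]
  exact (Finset.sum_filter_of_ne fun r _ hne =>
    by_contra fun hblk => hne (hf r hblk)).symm

lemma blk_mul_left (A B : Matrix I I ℂ)
    (hA : ∀ p q : I, blk p ≠ blk q → A p q = 0) (α β : ι) :
    blkOf blk (A * B) α β = blkOf blk A α α * blkOf blk B α β := by
  ext p q
  show (A * B) p.val q.val = _
  rw [Matrix.mul_apply, Matrix.mul_apply,
    sum_fiber blk α (fun r => A p.val r * B r q.val)
      (fun r hr => by
        show A p.val r * B r q.val = 0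
        rw [hA p.val r (fun h => hr (h.symm.trans p.prop)), zero_mul])]
  exact Finset.sum_congr rfl fun r _ => rfl

lemma blk_mul_right (A B : Matrix I I ℂ)
    (hB : ∀ p q : I, blk p ≠ blk q → B p q = 0) (α β : ι) :
    blkOf blk (A * B) α β = blkOf blk A α β * blkOf blk B β β := by
  ext p q
  show (A * B) p.val q.val = _
  rw [Matrix.mul_apply, Matrix.mul_apply,
    sum_fiber blk β (fun r => A p.val r * B r q.val)
      (fun r hr => by
        show A p.val r * B r q.val = 0
        rw [hB r q.val (fun h => hr (h.trans q.prop)), mul_zero])]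
  exact Finset.sum_congr rfl fun r _ => rfl

lemma blk_smul_one (c : ℂ) (α : ι) :
    blkOf blk ((c • 1 : Matrix I I ℂ)) α α = c • 1 := by
  ext p q
  show (c • (1 : Matrix I I ℂ)) p.val q.val = (c • (1 : Matrix _ _ ℂ)) p q
  simp [Matrix.one_apply, Subtype.ext_iff]

end Blocks

/- ---------- main theorem ---------- -/

/-- PRIR block trace: In the partially reduced basis (with `n = m+1`), for
every `α ∈ μ` and every `a ∈ {1,…,n-1}`:
`Tr[(φ^μ_R)^{αα}((a,n))] = (n/2)·(d_α/d_μ)·χ^μ(12) − ((n-2)/2)·χ^α(12)`. -/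
theorem stmt17 (m : ℕ) (hm : 2 ≤ m) {I ι : Type*} [Fintype I] [DecidableEq I] [DecidableEq ι]
    (φ : Equiv.Perm (Fin (m + 1)) →* Matrix I I ℂ)
    (hunit : ∀ g, φ g ∈ Matrix.unitaryGroup I ℂ)
    (hirr : MatRepIrreducible φ)
    (blk : I → ι)
    (ψ : ∀ α : ι, Equiv.Perm (Fin m) →*
        Matrix {p : I // blk p = α} {p : I // blk p = α} ℂ)
    (hirrψ : ∀ α : ι, MatRepIrreducible (ψ α))
    (hblock : ∀ (π : Equiv.Perm (Fin m)) (p q : I),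
        blk p ≠ blk q → φ (embedLast π) p q = 0)
    (hdiag : ∀ (π : Equiv.Perm (Fin m)) (α : ι) (p q : {x : I // blk x = α}),
        φ (embedLast π) p.val q.val = ψ α π p q)
    (α : ι) (a : Fin m) :
    Matrix.trace (blkOf blk (φ (Equiv.swap a.castSucc (Fin.last m))) α α)
      = (((m : ℂ) + 1) / 2) *
          ((Fintype.card {p : I // blk p = α} : ℂ) / (Fintype.card I : ℂ)) *
          Matrix.trace (φ (Equiv.swap (⟨0, by omega⟩ : Fin (m + 1)) ⟨1, by omega⟩))
        - (((m : ℂ) - 1) / 2) *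
            Matrix.trace (ψ α (Equiv.swap (⟨0, by omega⟩ : Fin m) ⟨1, by omega⟩)) := by
  classical
  -- abbreviations
  set χ : ℂ := Matrix.trace (φ (Equiv.swap (⟨0, by omega⟩ : Fin (m + 1)) ⟨1, by omega⟩)) with hχ
  set χα : ℂ := Matrix.trace (ψ α (Equiv.swap (⟨0, by omega⟩ : Fin m) ⟨1, by omega⟩)) with hχα
  by_cases hB : IsEmpty {p : I // blk p = α}
  · have h1 : Matrix.trace (blkOf blk (φ (Equiv.swap a.castSucc (Fin.last m))) α α) = 0 := by
      rw [Matrix.trace]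
      simp
    have h2 : χα = 0 := by rw [hχα, Matrix.trace]; simp
    have h3 : Fintype.card {p : I // blk p = α} = 0 := Fintype.card_eq_zero
    rw [h1, h2, h3]
    push_cast
    ring
  haveI hBne : Nonempty {p : I // blk p = α} := not_isEmpty_iff.mp hB
  haveI hIne : Nonempty I := ⟨hBne.some.val⟩
  have h01 : (⟨0, by omega⟩ : Fin (m + 1)) ≠ ⟨1, by omega⟩ := by
    intro h; simpa using congrArg Fin.val h
  have h01' : (⟨0, by omega⟩ : Fin m) ≠ ⟨1, by omega⟩ := by
    intro h; simpa using congrArg Fin.val h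
  -- the blkOf/ψ identification
  have hpsi : ∀ τ : Equiv.Perm (Fin m), blkOf blk (φ (embedLast τ)) α α = ψ α τ := by
    intro τ; ext p q; exact hdiag τ α p q
  -- conjugation-invariance of block traces
  have htrconj : ∀ (τ : Equiv.Perm (Fin m)) (X : Matrix I I ℂ), τ * τ = 1 →
      Matrix.trace (blkOf blk (φ (embedLast τ) * X * φ (embedLast τ)) α α)
        = Matrix.trace (blkOf blk X α α) := by
    intro τ X hτ
    rw [blk_mul_right blk _ _ (hblock τ) α α, blk_mul_left blk _ _ (hblock τ) α α, hpsi,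
      Matrix.trace_mul_comm, ← Matrix.mul_assoc, ← map_mul, hτ, map_one, Matrix.one_mul]
  -- trace of blocks of embedded swaps
  have htrψswap : ∀ b c : Fin m, b ≠ c →
      Matrix.trace (blkOf blk (φ (Equiv.swap b.castSucc c.castSucc)) α α) = χα := by
    intro b c hbc
    rw [← embedLast_swap, hpsi, hχα]
    exact trace_swap_eq (ψ α) hbc h01'
  -- traces of swaps
  have htrswap : ∀ i j : Fin (m + 1), i ≠ j → Matrix.trace (φ (Equiv.swap i j)) = χ := by
    intro i j hij
    rw [hχ]
    exact trace_swap_eq φ hij h01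
  -- the value T, and independence of a
  set T : ℂ := Matrix.trace (blkOf blk (φ (Equiv.swap a.castSucc (Fin.last m))) α α) with hT
  have hind : ∀ b : Fin m,
      Matrix.trace (blkOf blk (φ (Equiv.swap b.castSucc (Fin.last m))) α α) = T := by
    intro b
    rcases eq_or_ne b a with rfl | hba
    · rfl
    have hσa : (Equiv.swap b.castSucc a.castSucc) a.castSucc = b.castSucc :=
      Equiv.swap_apply_right _ _
    have hσl : (Equiv.swap b.castSucc a.castSucc) (Fin.last m) = Fin.last m :=
      Equiv.swap_apply_of_ne_of_ne (Fin.castSucc_lt_last b).ne' (Fin.castSucc_lt_last a).ne'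
    have hconj : Equiv.swap b.castSucc (Fin.last m)
        = embedLast (Equiv.swap b a) * Equiv.swap a.castSucc (Fin.last m)
            * embedLast (Equiv.swap b a) := by
      rw [embedLast_swap]
      conv_lhs => rw [← hσa, ← hσl]
      rw [Equiv.swap_apply_apply, Equiv.swap_inv]
    rw [hconj, map_mul, map_mul, htrconj _ _ (Equiv.swap_mul_self _ _), hT]
  -- the class-sum matrix
  set S : Matrix I I ℂ :=
    ∑ i : Fin (m + 1), ∑ j : Fin (m + 1), if i ≠ j then φ (Equiv.swap i j) else 0 with hS
  -- S commutes with the representation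
  have hScomm : ∀ g, S * φ g = φ g * S := by
    intro g
    have hre : (∑ i : Fin (m+1), ∑ j : Fin (m+1),
          if i ≠ j then φ (Equiv.swap (g i) (g j)) * φ g else 0)
        = ∑ i : Fin (m+1), ∑ j : Fin (m+1), if i ≠ j then φ (Equiv.swap i j) * φ g else 0 := by
      refine Fintype.sum_equiv g _ _ fun x => ?_
      refine Fintype.sum_equiv g _ _ fun y => ?_
      by_cases h : x = y
      · subst h; simp
      · rw [if_pos h, if_pos (fun hg => h (g.injective hg))]
    have h1 : φ g * S = ∑ i : Fin (m+1), ∑ j : Fin (m+1),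
        if i ≠ j then φ (Equiv.swap (g i) (g j)) * φ g else 0 := by
      rw [hS, Finset.mul_sum]
      refine Finset.sum_congr rfl fun i _ => ?_
      rw [Finset.mul_sum]
      refine Finset.sum_congr rfl fun j _ => ?_
      by_cases h : i = j
      · subst h; simp
      · rw [if_pos h, if_pos h, ← map_mul, ← map_mul]
        congr 1
        rw [Equiv.swap_apply_apply, inv_mul_cancel_right]
    have h2 : S * φ g = ∑ i : Fin (m+1), ∑ j : Fin (m+1),
        if i ≠ j then φ (Equiv.swap i j) * φ g else 0 := by
      rw [hS, Finset.sum_mul]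
      refine Finset.sum_congr rfl fun i _ => ?_
      rw [Finset.sum_mul]
      refine Finset.sum_congr rfl fun j _ => ?_
      by_cases h : i = j
      · subst h; simp
      · rw [if_pos h, if_pos h]
    rw [h1, h2, hre]
  obtain ⟨c, hc⟩ := schur φ hirr S hScomm
  -- trace of S
  have htrS : Matrix.trace S = ((m : ℂ) + 1) * m * χ := by
    rw [hS, Matrix.trace_sum]
    have hrow : ∀ i : Fin (m+1),
        Matrix.trace (∑ j : Fin (m+1), if i ≠ j then φ (Equiv.swap i j) else 0)
          = (m : ℂ) * χ := by
      intro i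
      rw [Matrix.trace_sum]
      have hterm : ∀ j : Fin (m+1),
          Matrix.trace (if i ≠ j then φ (Equiv.swap i j) else 0)
            = χ - (if i = j then χ else 0) := by
        intro j
        by_cases h : i = j
        · subst h; simp
        · rw [if_pos h, if_neg h, htrswap i j h, sub_zero]
      rw [Finset.sum_congr rfl fun j _ => hterm j, Finset.sum_sub_distrib,
        Finset.sum_const, Finset.sum_ite_eq]
      simp [Finset.card_univ]
      ring
    rw [Finset.sum_congr rfl fun i _ => hrow i, Finset.sum_const]
    simp [Finset.card_univ]
    ring
  have htrS' : Matrix.trace S = c * (Fintype.card I : ℂ) := by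
    rw [hc, Matrix.trace_smul, Matrix.trace_one]
    simp [mul_comm]
  -- block trace of S, computed two ways
  have hblkS : Matrix.trace (blkOf blk S α α)
      = c * (Fintype.card {p : I // blk p = α} : ℂ) := by
    rw [hc, blk_smul_one, Matrix.trace_smul, Matrix.trace_one]
    simp [mul_comm]
  -- blkOf and trace commute with sums
  have hblksum : Matrix.trace (blkOf blk S α α)
      = ∑ i : Fin (m+1), ∑ j : Fin (m+1),
          if i ≠ j then Matrix.trace (blkOf blk (φ (Equiv.swap i j)) α α) else 0 := by
    rw [hS]
    have : ∀ (F : Fin (m+1) → Fin (m+1) → Matrix I I ℂ),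
        Matrix.trace (blkOf blk (∑ i, ∑ j, F i j) α α)
          = ∑ i, ∑ j, Matrix.trace (blkOf blk (F i j) α α) := by
      intro F
      have hlin : ∀ (s : Finset (Fin (m+1))) (G : Fin (m+1) → Matrix I I ℂ),
          blkOf blk (∑ i ∈ s, G i) α α = ∑ i ∈ s, blkOf blk (G i) α α := by
        intro s G
        ext p q
        show (∑ i ∈ s, G i) p.val q.val = _
        simp [blkOf, Matrix.sum_apply]
      rw [hlin, Matrix.trace_sum]
      refine Finset.sum_congr rfl fun i _ => ?_
      rw [hlin, Matrix.trace_sum]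
    rw [this]
    refine Finset.sum_congr rfl fun i _ => Finset.sum_congr rfl fun j _ => ?_
    by_cases h : i = j
    · subst h
      simp only [ne_eq, not_true_eq_false, if_false]
      have : blkOf blk (0 : Matrix I I ℂ) α α = 0 := by ext p q; rfl
      rw [this, Matrix.trace_zero]
    · rw [if_pos h, if_pos h]
  -- split the double sum
  have hsplit : (∑ i : Fin (m+1), ∑ j : Fin (m+1),
        if i ≠ j then Matrix.trace (blkOf blk (φ (Equiv.swap i j)) α α) else 0)
      = (m : ℂ) * ((m : ℂ) - 1) * χα + 2 * m * T := by
    rw [Fin.sum_univ_castSucc]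
    have hrow1 : ∀ b : Fin m, (∑ j : Fin (m+1),
        if b.castSucc ≠ j then Matrix.trace (blkOf blk (φ (Equiv.swap b.castSucc j)) α α) else 0)
        = (∑ cc : Fin m, if b ≠ cc then χα else 0) + T := by
      intro b
      rw [Fin.sum_univ_castSucc]
      congr 1
      · refine Finset.sum_congr rfl fun cc _ => ?_
        by_cases h : b = cc
        · subst h; simp
        · rw [if_pos (fun hh => h (Fin.castSucc_injective _ hh)), if_pos h, htrψswap b cc h]
      · rw [if_pos (Fin.castSucc_lt_last b).ne, hind b]
    have hrowlast : (∑ j : Fin (m+1),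
        if Fin.last m ≠ j then Matrix.trace (blkOf blk (φ (Equiv.swap (Fin.last m) j)) α α) else 0)
        = (m : ℂ) * T := by
      rw [Fin.sum_univ_castSucc, if_neg (by simp), add_zero]
      have : ∀ b : Fin m, (if Fin.last m ≠ b.castSucc
            then Matrix.trace (blkOf blk (φ (Equiv.swap (Fin.last m) b.castSucc)) α α) else 0)
          = T := by
        intro b
        rw [if_pos (Fin.castSucc_lt_last b).ne', Equiv.swap_comm, hind b]
      rw [Finset.sum_congr rfl fun b _ => this b, Finset.sum_const]
      simp [Finset.card_univ]
    rw [hrowlast]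
    have hcount : ∀ b : Fin m, (∑ cc : Fin m, if b ≠ cc then χα else 0)
        = ((m : ℂ) - 1) * χα := by
      intro b
      have hterm : ∀ cc : Fin m, (if b ≠ cc then χα else 0)
          = χα - (if b = cc then χα else 0) := by
        intro cc; by_cases h : b = cc
        · subst h; simp
        · rw [if_pos h, if_neg h, sub_zero]
      rw [Finset.sum_congr rfl fun cc _ => hterm cc, Finset.sum_sub_distrib,
        Finset.sum_const, Finset.sum_ite_eq]
      simp [Finset.card_univ]
      ring
    rw [Finset.sum_congr rfl fun b _ => hrow1 b, Finset.sum_add_distrib,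
      Finset.sum_congr rfl fun b _ => hcount b, Finset.sum_const, Finset.sum_const]
    simp [Finset.card_univ]
    ring
  -- put things together
  have hm0 : (m : ℂ) ≠ 0 := Nat.cast_ne_zero.mpr (by omega)
  have hdμ : (Fintype.card I : ℂ) ≠ 0 := Nat.cast_ne_zero.mpr Fintype.card_pos.ne'
  have e1 : c * (Fintype.card I : ℂ) = ((m : ℂ) + 1) * m * χ := by
    rw [← htrS', htrS]
  have e2 : c * (Fintype.card {p : I // blk p = α} : ℂ)
      = (m : ℂ) * ((m : ℂ) - 1) * χα + 2 * m * T := by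
    rw [← hblkS, hblksum, hsplit]
  have hc2 : c = ((m : ℂ) + 1) * m * χ / (Fintype.card I : ℂ) := by
    rw [eq_div_iff hdμ]; linear_combination e1
  have h2m : (2 : ℂ) * m ≠ 0 := mul_ne_zero two_ne_zero hm0
  have hT3 : T = (c * (Fintype.card {p : I // blk p = α} : ℂ) - (m : ℂ) * ((m : ℂ) - 1) * χα)
      / (2 * m) := by
    rw [eq_div_iff h2m]; linear_combination -e2
  show T = ((m : ℂ) + 1) / 2 * ((Fintype.card {p : I // blk p = α} : ℂ) / (Fintype.card I : ℂ)) * χ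
      - ((m : ℂ) - 1) / 2 * χα
  rw [hT3, hc2]
  field_simp
end
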